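/- For finite lattices L₁, ..., L_t, the congruence density of the glued sum L₁ +̇ ⋯ +̇ L_t equals the product cd(L₁)⋯cd(L_t). -/

import Mathlib

/-- A congruence of a lattice: an equivalence relation compatible with `⊔` and `⊓`. -/
structure LatCon (L : Type) [Lattice L] : Type where
  r : L → L → Prop
  refl : ∀ a, r a a
  symm : ∀ {a b}, r a b → r b a
  trans : ∀ {a b c}, r a b → r b c → r a c
  sup : ∀ {a b c d}, r a b → r c d → r (a ⊔ c) (b ⊔ d)
  inf : ∀ {a b c d}, r a b → r c d → r (a ⊓ c) (b ⊓ d)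

/-- The congruence density of a finite lattice `L`. -/
noncomputable def latCd (L : Type) [Lattice L] : ℝ :=
  (Nat.card (LatCon L) : ℝ) / 2 ^ (Nat.card L - 1)

/-- The glued sum `L 0 +̇ L 1 +̇ ⋯ +̇ L (t-1)`, realized as the sublattice of the direct
product consisting of the tuples that are `⊤` before some pivot coordinate and `⊥` after
it. -/
def gluedSumSublatticeN {t : ℕ} (F : Fin t → Type) [∀ i, Lattice (F i)]
    [∀ i, BoundedOrder (F i)] : Sublattice (∀ i, F i) where
  carrier := {p | ∃ k : Fin t, (∀ i, i < k → p i = ⊤) ∧ ∀ i, k < i → p i = ⊥}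
  supClosed' := by
    rintro p ⟨k, hk1, hk2⟩ q ⟨l, hl1, hl2⟩
    refine ⟨max k l, fun i hi => ?_, fun i hi => ?_⟩
    · show p i ⊔ q i = ⊤
      rcases lt_max_iff.mp hi with h | h
      · rw [hk1 i h, top_sup_eq]
      · rw [hl1 i h, sup_top_eq]
    · show p i ⊔ q i = ⊥
      rw [hk2 i (lt_of_le_of_lt (le_max_left k l) hi),
        hl2 i (lt_of_le_of_lt (le_max_right k l) hi), sup_idem]
  infClosed' := by
    rintro p ⟨k, hk1, hk2⟩ q ⟨l, hl1, hl2⟩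
    refine ⟨min k l, fun i hi => ?_, fun i hi => ?_⟩
    · show p i ⊓ q i = ⊤
      rw [hk1 i (lt_of_lt_of_le hi (min_le_left k l)),
        hl1 i (lt_of_lt_of_le hi (min_le_right k l)), inf_idem]
    · show p i ⊓ q i = ⊥
      rcases min_lt_iff.mp hi with h | h
      · rw [hk2 i h, bot_inf_eq]
      · rw [hl2 i h, inf_bot_eq]

/-- The glued sum of the finite family `L 0, …, L (t-1)` of bounded lattices. -/
def GluedSumN {t : ℕ} (F : Fin t → Type) [∀ i, Lattice (F i)] [∀ i, BoundedOrder (F i)] :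
    Type := gluedSumSublatticeN F

instance {t : ℕ} (F : Fin t → Type) [∀ i, Lattice (F i)] [∀ i, BoundedOrder (F i)] :
    Lattice (GluedSumN F) :=
  inferInstanceAs (Lattice (gluedSumSublatticeN F))

namespace LatCdAux

variable {t : ℕ} (F : Fin t → Type) [∀ i, Lattice (F i)] [∀ i, BoundedOrder (F i)]

/-- The pointed element: `⊤` before `k`, `a` at `k`, `⊥` after `k`. -/
noncomputable def eFun (k : Fin t) (a : F k) : ∀ i, F i :=
  Function.update (fun i => if i < k then (⊤ : F i) else ⊥) k a

variable {F}

lemma eFun_same (k : Fin t) (a : F k) : eFun F k a k = a := by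
  simp [eFun]

lemma eFun_lt {k i : Fin t} (a : F k) (h : i < k) : eFun F k a i = ⊤ := by
  rw [eFun, Function.update_of_ne (ne_of_lt h)]
  simp [h]

lemma eFun_gt {k i : Fin t} (a : F k) (h : k < i) : eFun F k a i = ⊥ := by
  rw [eFun, Function.update_of_ne (ne_of_gt h)]
  simp [not_lt_of_gt h]

lemma eFun_mem (k : Fin t) (a : F k) : eFun F k a ∈ gluedSumSublatticeN F :=
  ⟨k, fun i hi => eFun_lt a hi, fun i hi => eFun_gt a hi⟩

variable (F)

/-- The pointed element as an element of the glued sum. -/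
noncomputable def e (k : Fin t) (a : F k) : GluedSumN F := ⟨eFun F k a, eFun_mem k a⟩

variable {F}

lemma e_sup (k : Fin t) (a b : F k) : e F k (a ⊔ b) = e F k a ⊔ e F k b := by
  apply Subtype.ext; funext j
  show eFun F k (a ⊔ b) j = eFun F k a j ⊔ eFun F k b j
  rcases lt_trichotomy j k with h | h | h
  · rw [eFun_lt _ h, eFun_lt _ h, eFun_lt _ h, sup_idem]
  · subst h; rw [eFun_same, eFun_same, eFun_same]
  · rw [eFun_gt _ h, eFun_gt _ h, eFun_gt _ h, sup_idem]

lemma e_inf (k : Fin t) (a b : F k) : e F k (a ⊓ b) = e F k a ⊓ e F k b := by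
  apply Subtype.ext; funext j
  show eFun F k (a ⊓ b) j = eFun F k a j ⊓ eFun F k b j
  rcases lt_trichotomy j k with h | h | h
  · rw [eFun_lt _ h, eFun_lt _ h, eFun_lt _ h, inf_idem]
  · subst h; rw [eFun_same, eFun_same, eFun_same]
  · rw [eFun_gt _ h, eFun_gt _ h, eFun_gt _ h, inf_idem]

lemma e_eq_sup_inf (p : GluedSumN F) (k : Fin t) :
    e F k (p.1 k) = (p ⊔ e F k ⊥) ⊓ e F k ⊤ := by
  apply Subtype.ext; funext j
  show eFun F k (p.1 k) j = (p.1 j ⊔ eFun F k ⊥ j) ⊓ eFun F k ⊤ j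
  rcases lt_trichotomy j k with h | h | h
  · rw [eFun_lt _ h, eFun_lt _ h, eFun_lt _ h, sup_top_eq, top_inf_eq]
  · subst h; rw [eFun_same, eFun_same, eFun_same, sup_bot_eq, inf_top_eq]
  · rw [eFun_gt _ h, eFun_gt _ h, eFun_gt _ h, sup_bot_eq, inf_bot_eq]

lemma e_top_eq_e_bot {k l : Fin t} (h : (l : ℕ) = (k : ℕ) + 1) :
    e F k ⊤ = e F l ⊥ := by
  have hkl : k < l := by omega
  apply Subtype.ext; funext j
  show eFun F k ⊤ j = eFun F l ⊥ j
  rcases lt_trichotomy j k with hj | hj | hj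
  · rw [eFun_lt _ hj, eFun_lt _ (lt_trans hj hkl)]
  · subst hj; rw [eFun_same, eFun_lt _ hkl]
  · rw [eFun_gt _ hj]
    rcases lt_trichotomy j l with hj' | hj' | hj'
    · omega
    · subst hj'; rw [eFun_same]
    · rw [eFun_gt _ hj']

/-- If `p` has pivot `k`, then `p = e k (p k)`. -/
lemma eq_e_pivot {p : GluedSumN F} {k : Fin t}
    (h1 : ∀ i, i < k → p.1 i = ⊤) (h2 : ∀ i, k < i → p.1 i = ⊥) :
    p = e F k (p.1 k) := by
  apply Subtype.ext; funext j
  show p.1 j = eFun F k (p.1 k) j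
  rcases lt_trichotomy j k with h | h | h
  · rw [eFun_lt _ h, h1 j h]
  · subst h; rw [eFun_same]
  · rw [eFun_gt _ h, h2 j h]

/-- The congruence on the glued sum obtained from a family of congruences, componentwise. -/
noncomputable def prodCon (θ : ∀ i, LatCon (F i)) : LatCon (GluedSumN F) where
  r p q := ∀ i, (θ i).r (p.1 i) (q.1 i)
  refl p i := (θ i).refl _
  symm h i := (θ i).symm (h i)
  trans h h' i := (θ i).trans (h i) (h' i)
  sup h h' i := (θ i).sup (h i) (h' i)
  inf h h' i := (θ i).inf (h i) (h' i)

/-- The congruence on `F i` obtained by restricting a congruence of the glued sum. -/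
noncomputable def resCon (Θ : LatCon (GluedSumN F)) (i : Fin t) : LatCon (F i) where
  r a b := Θ.r (e F i a) (e F i b)
  refl a := Θ.refl _
  symm h := Θ.symm h
  trans h h' := Θ.trans h h'
  sup {a b c d} h h' := by
    show Θ.r (e F i (a ⊔ c)) (e F i (b ⊔ d))
    rw [e_sup, e_sup]; exact Θ.sup h h'
  inf {a b c d} h h' := by
    show Θ.r (e F i (a ⊓ c)) (e F i (b ⊓ d))
    rw [e_inf, e_inf]; exact Θ.inf h h'

lemma aux_chain (Θ : LatCon (GluedSumN F)) (q : GluedSumN F) (l : Fin t)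
    (hq1 : ∀ i, i < l → q.1 i = ⊤) (hq2 : ∀ i, l < i → q.1 i = ⊥) :
    ∀ (m : ℕ) (k : Fin t), k ≤ l → (l : ℕ) - (k : ℕ) = m →
      (∀ i, k < i → i ≤ l → Θ.r (e F i ⊥) (e F i (q.1 i))) →
      Θ.r (e F k (q.1 k)) q := by
  intro m
  induction m with
  | zero =>
    intro k hkl hm _
    have : k = l := Fin.ext (by omega)
    subst this
    rw [← eq_e_pivot hq1 hq2]
    exact Θ.refl q
  | succ m ih =>
    intro k hkl hm H
    have hkl' : k < l := by omega
    have hk1 : (k : ℕ) + 1 < t := lt_of_le_of_lt (by omega) l.isLt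
    set k' : Fin t := ⟨(k : ℕ) + 1, hk1⟩ with hk'
    have hk'v : (k' : ℕ) = (k : ℕ) + 1 := rfl
    have hqk : q.1 k = ⊤ := hq1 k hkl'
    have h1 : e F k (q.1 k) = e F k' ⊥ := by
      rw [hqk]; exact e_top_eq_e_bot rfl
    have hk'l : k' ≤ l := by
      simp only [Fin.le_def]; omega
    have h2 : Θ.r (e F k' ⊥) (e F k' (q.1 k')) :=
      H k' (by simp only [Fin.lt_def]; omega) hk'l
    have h3 : Θ.r (e F k' (q.1 k')) q :=
      ih k' hk'l (by omega) (fun i hi hi' => H i (lt_trans (by simp only [Fin.lt_def]; omega) hi) hi')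
    rw [h1]
    exact Θ.trans h2 h3

lemma key_forward (Θ : LatCon (GluedSumN F)) {p q : GluedSumN F} (h : Θ.r p q) (i : Fin t) :
    Θ.r (e F i (p.1 i)) (e F i (q.1 i)) := by
  rw [e_eq_sup_inf p i, e_eq_sup_inf q i]
  exact Θ.inf (Θ.sup h (Θ.refl _)) (Θ.refl _)

lemma key_backward_le (Θ : LatCon (GluedSumN F)) {p q : GluedSumN F}
    {k l : Fin t}
    (hp1 : ∀ i, i < k → p.1 i = ⊤) (hp2 : ∀ i, k < i → p.1 i = ⊥)
    (hq1 : ∀ i, i < l → q.1 i = ⊤) (hq2 : ∀ i, l < i → q.1 i = ⊥)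
    (hkl : k ≤ l)
    (H : ∀ i, Θ.r (e F i (p.1 i)) (e F i (q.1 i))) :
    Θ.r p q := by
  have h1 : Θ.r (e F k (p.1 k)) (e F k (q.1 k)) := H k
  have h2 : Θ.r (e F k (q.1 k)) q := by
    refine aux_chain Θ q l hq1 hq2 ((l : ℕ) - (k : ℕ)) k hkl rfl (fun i hi hi' => ?_)
    have := H i
    rwa [hp2 i hi] at this
  rw [eq_e_pivot hp1 hp2]
  exact Θ.trans h1 h2

lemma key_backward (Θ : LatCon (GluedSumN F)) {p q : GluedSumN F}
    (H : ∀ i, Θ.r (e F i (p.1 i)) (e F i (q.1 i))) :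
    Θ.r p q := by
  obtain ⟨k, hp1, hp2⟩ := p.2
  obtain ⟨l, hq1, hq2⟩ := q.2
  rcases le_total k l with hkl | hlk
  · exact key_backward_le Θ hp1 hp2 hq1 hq2 hkl H
  · exact Θ.symm (key_backward_le Θ hq1 hq2 hp1 hp2 hlk (fun i => Θ.symm (H i)))

lemma latCon_ext {L : Type} [Lattice L] {Θ Θ' : LatCon L}
    (h : ∀ a b, Θ.r a b ↔ Θ'.r a b) : Θ = Θ' := by
  cases Θ; cases Θ'
  simp only [LatCon.mk.injEq]
  funext a b
  exact propext (h a b)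

/-- Congruences of the glued sum correspond to families of congruences. -/
noncomputable def conEquiv : LatCon (GluedSumN F) ≃ ∀ i, LatCon (F i) where
  toFun := resCon
  invFun := prodCon
  left_inv Θ := by
    apply latCon_ext
    intro p q
    constructor
    · intro h
      exact key_backward Θ h
    · intro h
      exact fun i => key_forward Θ h i
  right_inv θ := by
    funext i
    apply latCon_ext
    intro a b
    constructor
    · intro h
      have h2 : (θ i).r (eFun F i a i) (eFun F i b i) := h i
      rwa [eFun_same, eFun_same] at h2
    · intro h j
      show (θ j).r (eFun F i a j) (eFun F i b j)
      rcases lt_trichotomy j i with hj | hj | hj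
      · rw [eFun_lt _ hj, eFun_lt _ hj]; exact (θ j).refl _
      · subst hj; rw [eFun_same, eFun_same]; exact h
      · rw [eFun_gt _ hj, eFun_gt _ hj]; exact (θ j).refl _

section Card

variable [∀ i, Finite (F i)]

instance : Finite (GluedSumN F) := by
  have : Finite (∀ i, F i) := Pi.finite
  exact Subtype.finite

instance finiteLatCon (L : Type) [Lattice L] [Finite L] : Finite (LatCon L) := by
  have : Finite (L → L → Prop) := Pi.finite
  apply Finite.of_injective (fun Θ : LatCon L => Θ.r)
  intro Θ Θ' h
  have h' : Θ.r = Θ'.r := h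
  exact latCon_ext (fun a b => by rw [h'])

/-- The top element of the glued sum (for `t > 0`). -/
noncomputable def topEl (ht : 0 < t) : GluedSumN F :=
  ⟨fun _ => ⊤, ⟨⟨t - 1, by omega⟩, fun i _ => rfl, fun i hi => by
    exfalso
    have := i.isLt
    simp only [Fin.lt_def] at hi
    omega⟩⟩

noncomputable def repFun (ht : 0 < t) :
    Option (Σ i : Fin t, {a : F i // a ≠ ⊤}) → GluedSumN F
  | none => topEl ht
  | some ⟨i, a, _⟩ => e F i a

lemma repFun_bij (ht : 0 < t) : Function.Bijective (repFun (F := F) ht) := by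
  constructor
  · rintro (_ | ⟨i, a, ha⟩) (_ | ⟨j, b, hb⟩) h
    · rfl
    · exfalso
      have : (⊤ : F j) = b := congrFun (congrArg Subtype.val h) j |>.trans (eFun_same j b)
      exact hb this.symm
    · exfalso
      have : (eFun F i a) i = ⊤ := congrFun (congrArg Subtype.val h) i
      rw [eFun_same] at this
      exact ha this
    · rcases lt_trichotomy i j with hij | hij | hij
      · exfalso
        have : eFun F i a i = eFun F j b i := congrFun (congrArg Subtype.val h) i
        rw [eFun_same, eFun_lt _ hij] at this
        exact ha this
      · subst hij
        have : eFun F i a i = eFun F i b i := congrFun (congrArg Subtype.val h) i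
        rw [eFun_same, eFun_same] at this
        subst this
        rfl
      · exfalso
        have : eFun F i a j = eFun F j b j := congrFun (congrArg Subtype.val h) j
        rw [eFun_same, eFun_lt _ hij] at this
        exact hb this.symm
  · intro p
    obtain ⟨m, hm1, hm2⟩ := p.2
    by_cases h : ∀ i, p.1 i = ⊤
    · refine ⟨none, ?_⟩
      show topEl ht = p
      exact Subtype.ext (funext fun i => (h i).symm)
    · push_neg at h
      classical
      have hex : ∃ n : ℕ, ∃ hn : n < t, p.1 ⟨n, hn⟩ ≠ ⊤ := by
        obtain ⟨i, hi⟩ := h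
        exact ⟨i, i.isLt, by simpa using hi⟩
      let n := Nat.find hex
      obtain ⟨hn, hne⟩ := Nat.find_spec hex
      set k : Fin t := ⟨n, hn⟩ with hk
      have hmin : ∀ j : Fin t, j < k → p.1 j = ⊤ := by
        intro j hj
        by_contra hc
        have : (j : ℕ) < n := by exact hj
        exact Nat.find_min hex this ⟨j.isLt, by simpa using hc⟩
      have hmk : m ≤ k := by
        by_contra hc
        push_neg at hc
        exact hne (hm1 k hc)
      refine ⟨some ⟨k, p.1 k, hne⟩, ?_⟩
      show e F k (p.1 k) = p
      exact (eq_e_pivot hmin (fun i hi => hm2 i (lt_of_le_of_lt hmk hi))).symm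

lemma card_gluedSum (ht : 0 < t) :
    Nat.card (GluedSumN F) = 1 + ∑ i, (Nat.card (F i) - 1) := by
  classical
  have hF : ∀ i : Fin t, Fintype (F i) := fun i => Fintype.ofFinite _
  have h2 : ∀ i : Fin t, Nat.card {a : F i // a ≠ ⊤} = Nat.card (F i) - 1 := by
    intro i
    have hs := Nat.card_congr (Equiv.sumCompl (fun a : F i => a = ⊤))
    rw [Nat.card_sum] at hs
    have h1 : Nat.card {a : F i // a = ⊤} = 1 := by
      rw [Nat.card_eq_one_iff_unique]
      exact ⟨⟨fun a b => Subtype.ext (a.2.trans b.2.symm)⟩, ⟨⟨⊤, rfl⟩⟩⟩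
    simp only [ne_eq]
    omega
  have e1 := Nat.card_eq_of_bijective _ (repFun_bij (F := F) ht)
  rw [← e1]
  have hsig : Nat.card (Σ i : Fin t, {a : F i // a ≠ ⊤}) = ∑ i, (Nat.card (F i) - 1) := by
    rw [Nat.card_eq_fintype_card]
    rw [Fintype.card_sigma]
    exact Finset.sum_congr rfl fun i _ => by rw [← Nat.card_eq_fintype_card, h2 i]
  rw [Nat.card_eq_fintype_card, Fintype.card_option, ← Nat.card_eq_fintype_card, hsig, add_comm]

lemma card_gluedSum_sub_one :
    Nat.card (GluedSumN F) - 1 = ∑ i, (Nat.card (F i) - 1) := by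
  rcases Nat.eq_zero_or_pos t with ht | ht
  · subst ht
    have : IsEmpty (GluedSumN F) := by
      constructor
      rintro ⟨p, k, -⟩
      exact k.elim0
    simp [Nat.card_of_isEmpty]
  · rw [card_gluedSum ht]
    omega

lemma card_latCon_gluedSum :
    Nat.card (LatCon (GluedSumN F)) = ∏ i, Nat.card (LatCon (F i)) := by
  rw [Nat.card_congr (conEquiv (F := F)), Nat.card_pi]

end Card

end LatCdAux


/-- The congruence density of a glued sum `L 1 +̇ ⋯ +̇ L t` of finite lattices is the
product of the congruence densities `cd (L 1) ⋯ cd (L t)`. -/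
theorem latCd_gluedSum (t : ℕ) (F : Fin t → Type) [∀ i, Lattice (F i)]
    [∀ i, BoundedOrder (F i)] [∀ i, Finite (F i)] :
    latCd (GluedSumN F) = ∏ i : Fin t, latCd (F i) := by
  unfold latCd
  rw [LatCdAux.card_latCon_gluedSum, LatCdAux.card_gluedSum_sub_one]
  rw [Finset.prod_div_distrib]
  congr 1
  · push_cast
    rfl
  · rw [Finset.prod_pow_eq_pow_sum]
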